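/- In the setting of the recursive multi-layer model (matrices A^{(l)} with unit ℓ2-norm columns locally supported on m_l consecutive coordinates, coherences μ_l, independent random diagonal sign matrices D^{(l)}, representations x^{(l−1)} = A^{(l)} D^{(l)} x^{(l)}, overlap bounds S_l, initial noise level ζ_0, recursively defined ζ_l = √(‖x^{(l)}‖_{0,∞}^P)(μ_l (S_l − 1)|x_max^{(l)}| + ζ_{l−1}), and estimates x̂^{(l)} = H_{|supp(x^{(l)})|}((A^{(l)} D^{(l)})ᵀ x̂^{(l−1)})): on the event that supp(x̂^{(l)}) = supp(x^{(l)}) holds for all l = 1,…,L, the estimation errors satisfy ‖x̂^{(l)} − x^{(l)}‖_{2,∞}^P ≤ ζ_l for every l = 1,…,L. -/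

import Mathlib

/-- There exists a set of `k` indices within `s` on which `|v|` attains its
`k` largest values over `s`. -/
theorem exists_topk {α : Type*} [DecidableEq α] (s : Finset α) (v : α → ℝ) :
    ∀ k, k ≤ s.card → ∃ T, T ⊆ s ∧ T.card = k ∧
      ∀ i ∈ T, ∀ j ∈ s, j ∉ T → |v j| ≤ |v i| := by
  intro k
  induction k with
  | zero => exact fun _ => ⟨∅, Finset.empty_subset s, Finset.card_empty, by simp⟩
  | succ k ih =>
    intro hk
    obtain ⟨T, hTs, hcard, hT⟩ := ih (Nat.le_of_succ_le hk)
    have hne : (s \ T).Nonempty := by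
      rw [← Finset.card_pos, Finset.card_sdiff_of_subset hTs, hcard]; omega
    obtain ⟨b, hb, hmax⟩ := Finset.exists_max_image (s \ T) (fun j => |v j|) hne
    have hbs := (Finset.mem_sdiff.mp hb).1
    have hbT := (Finset.mem_sdiff.mp hb).2
    refine ⟨insert b T, Finset.insert_subset hbs hTs, ?_, ?_⟩
    · rw [Finset.card_insert_of_notMem hbT, hcard]
    · intro i hi j hjs hj
      have hjT : j ∉ T := fun h => hj (Finset.mem_insert_of_mem h)
      rcases Finset.mem_insert.mp hi with rfl | hiT
      · exact hmax j (Finset.mem_sdiff.mpr ⟨hjs, hjT⟩)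
      · exact hT i hiT j hjs hjT

/-- Hard thresholding `H_k` on the index set `s`: keeps the `k` entries of largest
absolute value (among indices in `s`) and sets all other entries to zero. -/
noncomputable def hardThreshold {α : Type*} [DecidableEq α] (s : Finset α) (k : ℕ)
    (v : α → ℝ) : α → ℝ :=
  fun i => if i ∈ (exists_topk s v (min k s.card) (min_le_right _ _)).choose then v i else 0

/-- `‖x‖_{2,∞}^P` for a vector of dimension `N` (indexed by `0,…,N-1`) and patch
length `m`: the maximum over all starting positions `i < N` of the ℓ2-norm of the
`m` consecutive entries of `x` starting at `i`, with cyclic wraparound. -/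
noncomputable def patchNorm2 (N m : ℕ) (x : ℕ → ℝ) : ℝ :=
  sSup ((fun i => Real.sqrt (∑ j ∈ Finset.range m, x ((i + j) % N) ^ 2)) '' Set.Iio N)

/-- `‖x‖_{0,∞}^P` for a vector of dimension `N` and patch length `m`: the maximum
over all starting positions `i < N` of the number of nonzero entries among the `m`
consecutive entries of `x` starting at `i`, with cyclic wraparound. -/
noncomputable def patchNorm0 (N m : ℕ) (x : ℕ → ℝ) : ℕ :=
  (Finset.range N).sup (fun i => Set.ncard {j | j < m ∧ x ((i + j) % N) ≠ 0})


lemma le_patchNorm2 (N m : ℕ) (x : ℕ → ℝ) (i : ℕ) (hi : i < N) :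
    Real.sqrt (∑ j ∈ Finset.range m, x ((i + j) % N) ^ 2) ≤ patchNorm2 N m x :=
  le_csSup (((Set.finite_Iio N).image _).bddAbove) ⟨i, hi, rfl⟩

lemma patchNorm2_le (N m : ℕ) (x : ℕ → ℝ) (c : ℝ) (hc : 0 ≤ c)
    (h : ∀ i < N, Real.sqrt (∑ j ∈ Finset.range m, x ((i + j) % N) ^ 2) ≤ c) :
    patchNorm2 N m x ≤ c := by
  apply Real.sSup_le _ hc
  rintro y ⟨i, hi, rfl⟩; exact h i hi

lemma my_sum_image_le {α β : Type*} [DecidableEq β] (s : Finset α) (g : α → β) (f : β → ℝ)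
    (hf : ∀ b, 0 ≤ f b) : ∑ b ∈ s.image g, f b ≤ ∑ a ∈ s, f (g a) := by
  classical
  induction s using Finset.induction_on with
  | empty => simp
  | @insert a t h ih =>
    rw [Finset.image_insert, Finset.sum_insert h]
    by_cases hg : g a ∈ t.image g
    · rw [Finset.insert_eq_self.mpr hg]
      have := hf (g a); linarith
    · rw [Finset.sum_insert hg]; linarith

lemma cs_patch (N' m' : ℕ) (a e : ℕ → ℝ)
    (hA : ∑ t ∈ Finset.range N', a t ^ 2 = 1)
    (i : ℕ) (hi : i < N')
    (hsupp : ∀ t < N', a t ≠ 0 → ∃ s < m', t = (i + s) % N') :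
    |∑ t ∈ Finset.range N', a t * e t| ≤ patchNorm2 N' m' e := by
  classical
  set P := (Finset.range N').filter (fun t => a t ≠ 0) with hP
  have h1 : ∑ t ∈ Finset.range N', a t * e t = ∑ t ∈ P, a t * e t := by
    rw [hP, Finset.sum_filter_of_ne]
    intro t _ h ha; exact h (by rw [ha, zero_mul])
  have hP1 : ∑ t ∈ P, a t ^ 2 ≤ 1 := by
    rw [← hA]
    exact Finset.sum_le_sum_of_subset_of_nonneg (Finset.filter_subset _ _)
      (fun _ _ _ => sq_nonneg _)
  have hsub : P ⊆ (Finset.range m').image (fun s => (i + s) % N') := by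
    intro t ht
    obtain ⟨htN, hta⟩ := Finset.mem_filter.mp ht
    obtain ⟨s, hs, hts⟩ := hsupp t (Finset.mem_range.mp htN) hta
    exact Finset.mem_image.mpr ⟨s, Finset.mem_range.mpr hs, hts.symm⟩
  have hP2 : ∑ t ∈ P, e t ^ 2 ≤ ∑ s ∈ Finset.range m', e ((i + s) % N') ^ 2 :=
    le_trans (Finset.sum_le_sum_of_subset_of_nonneg hsub (fun _ _ _ => sq_nonneg _))
      (my_sum_image_le _ _ _ (fun _ => sq_nonneg _))
  have hcs := Finset.sum_mul_sq_le_sq_mul_sq P a e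
  have h2 : (∑ t ∈ P, a t * e t) ^ 2 ≤ ∑ s ∈ Finset.range m', e ((i + s) % N') ^ 2 := by
    have he : 0 ≤ ∑ t ∈ P, e t ^ 2 := Finset.sum_nonneg (fun _ _ => sq_nonneg _)
    nlinarith [Finset.sum_nonneg (f := fun s => e ((i+s) % N') ^ 2)
      (s := Finset.range m') (fun _ _ => sq_nonneg _)]
  calc |∑ t ∈ Finset.range N', a t * e t|
      = Real.sqrt ((∑ t ∈ P, a t * e t) ^ 2) := by rw [h1, Real.sqrt_sq_eq_abs]
    _ ≤ Real.sqrt (∑ s ∈ Finset.range m', e ((i + s) % N') ^ 2) := Real.sqrt_le_sqrt h2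
    _ ≤ patchNorm2 N' m' e := le_patchNorm2 _ _ _ _ hi

lemma hardThreshold_cases {α : Type*} [DecidableEq α] (s : Finset α) (k : ℕ) (v : α → ℝ)
    (i : α) : hardThreshold s k v i = v i ∨ hardThreshold s k v i = 0 := by
  unfold hardThreshold
  split
  · exact Or.inl rfl
  · exact Or.inr rfl

/-- Multi-layer stability on the success event: in the recursive
multi-layer model (here with a fixed realisation of the diagonal sign matrices),
if the forward pass recovers the support of the latent representation at every
layer `l = 1,…,L`, then the estimation errors satisfy
`‖x̂^{(l)} − x^{(l)}‖_{2,∞}^P ≤ ζ_l` for every `l = 1,…,L`, where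
`ζ_l = √(‖x^{(l)}‖_{0,∞}^P)(μ_l (S_l − 1)|x_max^{(l)}| + ζ_{l−1})`. -/
theorem multilayer_stability_on_success
    (L M : ℕ) (n : ℕ → ℕ) (hn0 : n 0 = 1)
    (m : ℕ → ℕ)
    -- `A l j t`: entry `t` of column `j` of the layer-`l` dictionary
    (A : ℕ → ℕ → ℕ → ℝ)
    (hunit : ∀ l, 1 ≤ l → l ≤ L → ∀ j < n l * M,
      ∑ t ∈ Finset.range (n (l - 1) * M), A l j t ^ 2 = 1)
    -- mutual coherences `μ_l`
    (μ : ℕ → ℝ) (hμ0 : ∀ l, 0 ≤ μ l)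
    (hμ : ∀ l, 1 ≤ l → l ≤ L → ∀ i < n l * M, ∀ j < n l * M, i ≠ j →
      |∑ t ∈ Finset.range (n (l - 1) * M), A l i t * A l j t| ≤ μ l)
    -- each column of `A^{(l)}` is supported on `m_l` consecutive coordinates
    (hloc : ∀ l, 1 ≤ l → l ≤ L → ∀ j < n l * M, ∃ i < n (l - 1) * M,
      ∀ t < n (l - 1) * M, A l j t ≠ 0 → ∃ s < m l, t = (i + s) % (n (l - 1) * M))
    -- a fixed realisation of the diagonal sign matrices `D^{(l)} = diag(ε l ·)`
    (ε : ℕ → ℕ → ℝ)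
    (hε : ∀ l j, ε l j = 1 ∨ ε l j = -1)
    -- the latent representations: `x^{(l−1)} = A^{(l)} D^{(l)} x^{(l)}`
    (X : ℕ → ℕ → ℝ)
    (hXrec : ∀ l, 1 ≤ l → l ≤ L → ∀ t, X (l - 1) t =
      ∑ j ∈ Finset.range (n l * M), ε l j * X l j * A l j t)
    -- noise on the observed data, bounded in patch norm
    (v0 : ℕ → ℝ) (ζ : ℕ → ℝ)
    (hv0 : patchNorm2 (n 0 * M) (m 1) v0 ≤ ζ 0)
    -- overlap (stripe-sparsity) bounds `S_l`
    (S : ℕ → ℕ)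
    (hS : ∀ l, 1 ≤ l → l ≤ L → ∀ k < n l * M,
      Set.ncard {j | j < n l * M ∧ X l j ≠ 0 ∧
        (∑ t ∈ Finset.range (n (l - 1) * M), A l k t * A l j t) ≠ 0} ≤ S l)
    -- largest nonzero magnitudes at each layer
    (xmax : ℕ → ℝ)
    (hx : ∀ l, 1 ≤ l → l ≤ L → ∀ j < n l * M, |X l j| ≤ xmax l)
    -- the recursively defined error levels `ζ_l`
    (hζ : ∀ l, 1 ≤ l → l ≤ L → ζ l =
      Real.sqrt (patchNorm0 (n l * M) (m (l + 1)) (X l)) *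
        (μ l * ((S l : ℝ) - 1) * xmax l + ζ (l - 1)))
    -- the forward-pass estimates: `x̂^{(0)} = x^{(0)} + v^{(0)}` and
    -- `x̂^{(l)} = H_{|supp(x^{(l)})|}((A^{(l)} D^{(l)})ᵀ x̂^{(l−1)})`
    (Xhat : ℕ → ℕ → ℝ)
    (hXhat0 : ∀ t, Xhat 0 t = X 0 t + v0 t)
    (hXhatrec : ∀ l, 1 ≤ l → l ≤ L → Xhat l =
      hardThreshold (Finset.range (n l * M))
        (Set.ncard {j | j < n l * M ∧ X l j ≠ 0})
        (fun k => ε l k *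
          ∑ t ∈ Finset.range (n (l - 1) * M), A l k t * Xhat (l - 1) t))
    -- the success event: the support is recovered at every layer
    (hsucc : ∀ l, 1 ≤ l → l ≤ L → ∀ j < n l * M, (Xhat l j ≠ 0 ↔ X l j ≠ 0)) :
    ∀ l, 1 ≤ l → l ≤ L →
      patchNorm2 (n l * M) (m (l + 1)) (fun t => Xhat l t - X l t) ≤ ζ l := by
  classical
  intro l
  induction l using Nat.strong_induction_on with
  | _ l ih =>
  intro hl1 hlL
  have hprev : patchNorm2 (n (l-1) * M) (m l) (fun t => Xhat (l-1) t - X (l-1) t)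
      ≤ ζ (l-1) := by
    rcases eq_or_lt_of_le hl1 with h1 | h2
    · have hl : l = 1 := h1.symm
      subst hl
      have he : (fun t => Xhat 0 t - X 0 t) = v0 := by
        funext t; rw [hXhat0 t]; ring
      simpa [he] using hv0
    · have h3 := ih (l-1) (by omega) (by omega) (by omega)
      rwa [show l - 1 + 1 = l by omega] at h3
  have hzero : ∀ j < n l * M, X l j = 0 → Xhat l j = 0 := by
    intro j hj h0
    by_contra h
    exact ((hsucc l hl1 hlL j hj).mp h) h0
  by_cases hsup : ∃ j, j < n l * M ∧ X l j ≠ 0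
  · obtain ⟨j₀, hj₀N, hj₀⟩ := hsup
    have key : ∀ j, j < n l * M → X l j ≠ 0 →
        |Xhat l j - X l j| ≤ μ l * ((S l : ℝ) - 1) * xmax l + ζ (l - 1) := by
      intro j hjN hjX
      have hXhatne : Xhat l j ≠ 0 := (hsucc l hl1 hlL j hjN).mpr hjX
      have hform : Xhat l j
          = ε l j * ∑ t ∈ Finset.range (n (l-1) * M), A l j t * Xhat (l-1) t := by
        have h1 := congrFun (hXhatrec l hl1 hlL) j
        rcases hardThreshold_cases (Finset.range (n l * M))
            (Set.ncard {j | j < n l * M ∧ X l j ≠ 0})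
            (fun k => ε l k * ∑ t ∈ Finset.range (n (l-1) * M), A l k t * Xhat (l-1) t) j
          with h | h
        · exact h1.trans h
        · exact absurd (h1.trans h) hXhatne
      have hEbound : |∑ t ∈ Finset.range (n (l-1) * M),
          A l j t * (Xhat (l-1) t - X (l-1) t)| ≤ ζ (l-1) := by
        obtain ⟨i, hi, hs⟩ := hloc l hl1 hlL j hjN
        exact le_trans (cs_patch _ _ _ _ (hunit l hl1 hlL j hjN) i hi hs) hprev
      have hGjj : ∑ t ∈ Finset.range (n (l-1) * M), A l j t * A l j t = 1 := by
        rw [← hunit l hl1 hlL j hjN]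
        exact Finset.sum_congr rfl (fun t _ => (pow_two _).symm)
      have hsum1 : ∑ t ∈ Finset.range (n (l-1)*M), A l j t * X (l-1) t
          = ∑ k ∈ Finset.range (n l * M), ε l k * X l k *
              (∑ t ∈ Finset.range (n (l-1) * M), A l j t * A l k t) := by
        have h1 : ∀ t ∈ Finset.range (n (l-1)*M), A l j t * X (l-1) t
            = ∑ k ∈ Finset.range (n l * M), A l j t * (ε l k * X l k * A l k t) := by
          intro t _; rw [hXrec l hl1 hlL t, Finset.mul_sum]
        rw [Finset.sum_congr rfl h1, Finset.sum_comm]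
        refine Finset.sum_congr rfl (fun k _ => ?_)
        rw [Finset.mul_sum]
        exact Finset.sum_congr rfl (fun t _ => by ring)
      have hsum2 : ∑ t ∈ Finset.range (n (l-1)*M), A l j t * Xhat (l-1) t
          = (∑ k ∈ Finset.range (n l * M), ε l k * X l k *
              (∑ t ∈ Finset.range (n (l-1) * M), A l j t * A l k t))
            + ∑ t ∈ Finset.range (n (l-1) * M), A l j t * (Xhat (l-1) t - X (l-1) t) := by
        rw [← hsum1, ← Finset.sum_add_distrib]
        exact Finset.sum_congr rfl (fun t _ => by ring)
      have hεj : ε l j * ε l j = 1 := by rcases hε l j with h | h <;> rw [h] <;> norm_num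
      have hsplit : ∑ k ∈ Finset.range (n l * M), ε l k * X l k *
              (∑ t ∈ Finset.range (n (l-1) * M), A l j t * A l k t)
          = ε l j * X l j * (∑ t ∈ Finset.range (n (l-1) * M), A l j t * A l j t)
            + ∑ k ∈ (Finset.range (n l * M)).erase j, ε l k * X l k *
              (∑ t ∈ Finset.range (n (l-1) * M), A l j t * A l k t) :=
        (Finset.add_sum_erase _ _ (Finset.mem_range.mpr hjN)).symm
      have hdecomp : Xhat l j - X l j
          = ε l j * (∑ k ∈ (Finset.range (n l * M)).erase j, ε l k * X l k *
              (∑ t ∈ Finset.range (n (l-1) * M), A l j t * A l k t))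
            + ε l j * ∑ t ∈ Finset.range (n (l-1) * M),
                A l j t * (Xhat (l-1) t - X (l-1) t) := by
        rw [hform, hsum2, hsplit, hGjj]
        linear_combination X l j * hεj
      set F := ((Finset.range (n l * M)).erase j).filter
        (fun k => X l k ≠ 0 ∧ (∑ t ∈ Finset.range (n (l-1) * M), A l j t * A l k t) ≠ 0)
        with hF
      have hxm : 0 ≤ xmax l := le_trans (abs_nonneg _) (hx l hl1 hlL j hjN)
      have hRF : ∑ k ∈ (Finset.range (n l * M)).erase j, ε l k * X l k *
              (∑ t ∈ Finset.range (n (l-1) * M), A l j t * A l k t)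
          = ∑ k ∈ F, ε l k * X l k *
              (∑ t ∈ Finset.range (n (l-1) * M), A l j t * A l k t) := by
        rw [hF, Finset.sum_filter_of_ne]
        intro k _ hk
        exact ⟨fun h0 => hk (by simp [h0]), fun h0 => hk (by simp [h0])⟩
      have hterm : ∀ k ∈ F, |ε l k * X l k *
          (∑ t ∈ Finset.range (n (l-1) * M), A l j t * A l k t)| ≤ μ l * xmax l := by
        intro k hk
        have hkr := Finset.mem_erase.mp (Finset.mem_filter.mp hk).1
        have hkN : k < n l * M := Finset.mem_range.mp hkr.2
        have h1 : |ε l k| = 1 := by rcases hε l k with h | h <;> rw [h] <;> norm_num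
        rw [abs_mul, abs_mul, h1, one_mul]
        have h2 := hx l hl1 hlL k hkN
        have h3 := hμ l hl1 hlL j hjN k hkN (Ne.symm hkr.1)
        calc |X l k| * |∑ t ∈ Finset.range (n (l-1) * M), A l j t * A l k t|
            ≤ xmax l * μ l := mul_le_mul h2 h3 (abs_nonneg _) hxm
          _ = μ l * xmax l := mul_comm _ _
      have hRbound : |∑ k ∈ (Finset.range (n l * M)).erase j, ε l k * X l k *
              (∑ t ∈ Finset.range (n (l-1) * M), A l j t * A l k t)|
          ≤ (F.card : ℝ) * (μ l * xmax l) := by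
        rw [hRF]
        refine le_trans (Finset.abs_sum_le_sum_abs _ _) ?_
        simpa [nsmul_eq_mul] using Finset.sum_le_card_nsmul F _ _ hterm
      have hcard : (F.card : ℝ) ≤ (S l : ℝ) - 1 := by
        set T := (Finset.range (n l * M)).filter
          (fun k => X l k ≠ 0 ∧ (∑ t ∈ Finset.range (n (l-1) * M), A l j t * A l k t) ≠ 0)
          with hT
        have hTS : T.card ≤ S l := by
          have h1 := hS l hl1 hlL j hjN
          have h2 : {k | k < n l * M ∧ X l k ≠ 0 ∧
              (∑ t ∈ Finset.range (n (l-1) * M), A l j t * A l k t) ≠ 0} = ↑T := by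
            ext k
            simp [hT, Finset.mem_filter, Finset.mem_range, and_assoc]
          rw [h2, Set.ncard_coe_finset] at h1
          exact h1
        have hjT : j ∈ T := Finset.mem_filter.mpr
          ⟨Finset.mem_range.mpr hjN, hjX, by rw [hGjj]; norm_num⟩
        have hFT : F ⊆ T.erase j := by
          intro k hk
          obtain ⟨hke, hkp⟩ := Finset.mem_filter.mp hk
          obtain ⟨hkj, hkr⟩ := Finset.mem_erase.mp hke
          exact Finset.mem_erase.mpr ⟨hkj, Finset.mem_filter.mpr ⟨hkr, hkp⟩⟩
        have h4 : F.card ≤ T.card - 1 := by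
          have := Finset.card_le_card hFT
          rwa [Finset.card_erase_of_mem hjT] at this
        have h5 : 1 ≤ T.card := Finset.card_pos.mpr ⟨j, hjT⟩
        have h6 : F.card + 1 ≤ S l := by omega
        have h7 : (F.card : ℝ) + 1 ≤ (S l : ℝ) := by exact_mod_cast h6
        linarith
      have hμx : 0 ≤ μ l * xmax l := mul_nonneg (hμ0 l) hxm
      have hεabs : |ε l j| = 1 := by rcases hε l j with h | h <;> rw [h] <;> norm_num
      calc |Xhat l j - X l j|
          = |ε l j * (∑ k ∈ (Finset.range (n l * M)).erase j, ε l k * X l k *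
              (∑ t ∈ Finset.range (n (l-1) * M), A l j t * A l k t))
            + ε l j * ∑ t ∈ Finset.range (n (l-1) * M),
                A l j t * (Xhat (l-1) t - X (l-1) t)| := by rw [hdecomp]
        _ ≤ |ε l j * (∑ k ∈ (Finset.range (n l * M)).erase j, ε l k * X l k *
              (∑ t ∈ Finset.range (n (l-1) * M), A l j t * A l k t))|
            + |ε l j * ∑ t ∈ Finset.range (n (l-1) * M),
                A l j t * (Xhat (l-1) t - X (l-1) t)| := abs_add_le _ _
        _ = |∑ k ∈ (Finset.range (n l * M)).erase j, ε l k * X l k *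
              (∑ t ∈ Finset.range (n (l-1) * M), A l j t * A l k t)|
            + |∑ t ∈ Finset.range (n (l-1) * M),
                A l j t * (Xhat (l-1) t - X (l-1) t)| := by
              rw [abs_mul, abs_mul, hεabs, one_mul, one_mul]
        _ ≤ (F.card : ℝ) * (μ l * xmax l) + ζ (l-1) := add_le_add hRbound hEbound
        _ ≤ ((S l : ℝ) - 1) * (μ l * xmax l) + ζ (l-1) :=
            add_le_add (mul_le_mul_of_nonneg_right hcard hμx) le_rfl
        _ = μ l * ((S l : ℝ) - 1) * xmax l + ζ (l-1) := by ring
    have hβ : 0 ≤ μ l * ((S l : ℝ) - 1) * xmax l + ζ (l - 1) :=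
      le_trans (abs_nonneg _) (key j₀ hj₀N hj₀)
    rw [hζ l hl1 hlL]
    apply patchNorm2_le _ _ _ _ (mul_nonneg (Real.sqrt_nonneg _) hβ)
    intro i hiN
    have hNpos : 0 < n l * M := lt_of_le_of_lt (Nat.zero_le i) hiN
    set C := (Finset.range (m (l+1))).filter
      (fun s => X l ((i + s) % (n l * M)) ≠ 0) with hC
    have hcnt : C.card ≤ patchNorm0 (n l * M) (m (l+1)) (X l) := by
      have h1 : {j | j < m (l+1) ∧ X l ((i + j) % (n l * M)) ≠ 0} = ↑C := by
        ext s
        simp [hC, Finset.mem_filter, Finset.mem_range]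
      have h2 : Set.ncard {j | j < m (l+1) ∧ X l ((i + j) % (n l * M)) ≠ 0}
          ≤ patchNorm0 (n l * M) (m (l+1)) (X l) := by
        unfold patchNorm0
        exact Finset.le_sup (f := fun i => Set.ncard
          {j | j < m (l+1) ∧ X l ((i + j) % (n l * M)) ≠ 0}) (Finset.mem_range.mpr hiN)
      rw [h1, Set.ncard_coe_finset] at h2
      exact h2
    have hsumb : ∑ s ∈ Finset.range (m (l+1)),
        (Xhat l ((i+s) % (n l * M)) - X l ((i+s) % (n l * M)))^2
        ≤ (C.card : ℝ) * (μ l * ((S l : ℝ) - 1) * xmax l + ζ (l-1))^2 := by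
      rw [← Finset.sum_filter_add_sum_filter_not (Finset.range (m (l+1)))
        (fun s => X l ((i+s) % (n l * M)) ≠ 0)]
      have hz : ∑ s ∈ (Finset.range (m (l+1))).filter
          (fun s => ¬ X l ((i+s) % (n l * M)) ≠ 0),
          (Xhat l ((i+s) % (n l * M)) - X l ((i+s) % (n l * M)))^2 = 0 := by
        apply Finset.sum_eq_zero
        intro s hs
        have h0 : X l ((i+s) % (n l * M)) = 0 :=
          not_not.mp (Finset.mem_filter.mp hs).2
        rw [h0, hzero _ (Nat.mod_lt _ hNpos) h0]
        ring
      rw [hz, add_zero]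
      refine le_trans (Finset.sum_le_card_nsmul C _ _ ?_) (by rw [nsmul_eq_mul])
      intro s hs
      have hsN : (i+s) % (n l * M) < n l * M := Nat.mod_lt _ hNpos
      have hsX : X l ((i+s) % (n l * M)) ≠ 0 := (Finset.mem_filter.mp hs).2
      have h := abs_le.mp (key _ hsN hsX)
      exact sq_le_sq' h.1 h.2
    calc Real.sqrt (∑ s ∈ Finset.range (m (l+1)),
          (Xhat l ((i+s) % (n l * M)) - X l ((i+s) % (n l * M)))^2)
        ≤ Real.sqrt ((C.card : ℝ) * (μ l * ((S l : ℝ) - 1) * xmax l + ζ (l-1))^2) :=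
          Real.sqrt_le_sqrt hsumb
      _ ≤ Real.sqrt ((patchNorm0 (n l * M) (m (l+1)) (X l) : ℝ) *
            (μ l * ((S l : ℝ) - 1) * xmax l + ζ (l-1))^2) :=
          Real.sqrt_le_sqrt
            (mul_le_mul_of_nonneg_right (Nat.cast_le.mpr hcnt) (sq_nonneg _))
      _ = Real.sqrt (patchNorm0 (n l * M) (m (l+1)) (X l)) *
            (μ l * ((S l : ℝ) - 1) * xmax l + ζ (l-1)) := by
          rw [Real.sqrt_mul (Nat.cast_nonneg _), Real.sqrt_sq hβ]
  · push_neg at hsup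
    have hzero2 : ∀ t < n l * M, Xhat l t - X l t = 0 := by
      intro t ht
      rw [hsup t ht, hzero t ht (hsup t ht)]
      ring
    have hζ0 : ζ l = 0 := by
      rw [hζ l hl1 hlL]
      have hp0 : patchNorm0 (n l * M) (m (l+1)) (X l) = 0 := by
        have h1 : patchNorm0 (n l * M) (m (l+1)) (X l) ≤ 0 := by
          apply Finset.sup_le
          intro i hi
          have hNpos : 0 < n l * M := lt_of_le_of_lt (Nat.zero_le i) (Finset.mem_range.mp hi)
          have h2 : {j | j < m (l+1) ∧ X l ((i + j) % (n l * M)) ≠ 0} = ∅ := by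
            ext s
            simp only [Set.mem_setOf_eq, Set.mem_empty_iff_false, iff_false, not_and,
              not_not]
            intro _
            exact hsup _ (Nat.mod_lt _ hNpos)
          rw [h2, Set.ncard_empty]
        omega
      rw [hp0]
      simp
    rw [hζ0]
    apply patchNorm2_le _ _ _ _ le_rfl
    intro i hi
    have hNpos : 0 < n l * M := lt_of_le_of_lt (Nat.zero_le i) hi
    have h0 : ∑ s ∈ Finset.range (m (l+1)),
        (Xhat l ((i+s) % (n l * M)) - X l ((i+s) % (n l * M)))^2 = 0 :=
      Finset.sum_eq_zero (fun s _ => by rw [hzero2 _ (Nat.mod_lt _ hNpos)]; ring)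
    rw [h0, Real.sqrt_zero]
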